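/- Let n ≥ 1, let v ∈ ℝⁿ be a nonzero vector, and let s ≥ 1 be an integer. Then the second moment of the stochastic quantization Q_s(v) satisfies E[‖Q_s(v)‖₂²] ≤ (1 + min(n/s², √n/s)) · ‖v‖₂². -/

import Mathlib

open MeasureTheory ProbabilityTheory

/-- `Qv` is (a realization on the probability space `(Ω, μ)` of) the stochastic
quantization `Q_s(v)` of the nonzero vector `v ∈ ℝⁿ` with `s` quantization levels:
`Q_s(v)_i = ‖v‖₂ · sgn(vᵢ) · ξᵢ`, where the `ξᵢ` are independent, and, with
`aᵢ = |vᵢ|/‖v‖₂` and `ℓᵢ ∈ {0, …, s−1}` such that `aᵢ ∈ [ℓᵢ/s, (ℓᵢ+1)/s]`, `ξᵢ` takes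
the value `(ℓᵢ+1)/s` with probability `pᵢ = aᵢ·s − ℓᵢ` and `ℓᵢ/s` with probability
`1 − pᵢ`. -/
def IsStochQuant {n : ℕ} (s : ℕ) {Ω : Type*} [MeasurableSpace Ω] (μ : Measure Ω)
    (v : EuclideanSpace ℝ (Fin n)) (Qv : Ω → EuclideanSpace ℝ (Fin n)) : Prop :=
  ∃ (ξ : Fin n → Ω → ℝ) (ℓ : Fin n → ℕ),
    (∀ i, Measurable (ξ i)) ∧
    iIndepFun ξ μ ∧
    (∀ i, ℓ i ≤ s - 1) ∧
    (∀ i, (ℓ i : ℝ) / s ≤ |v i| / ‖v‖ ∧ |v i| / ‖v‖ ≤ ((ℓ i : ℝ) + 1) / s) ∧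
    (∀ i, μ {ω | ξ i ω = ((ℓ i : ℝ) + 1) / s} =
        ENNReal.ofReal (|v i| / ‖v‖ * s - ℓ i)) ∧
    (∀ i, μ {ω | ξ i ω = (ℓ i : ℝ) / s} =
        1 - ENNReal.ofReal (|v i| / ‖v‖ * s - ℓ i)) ∧
    (∀ ω i, Qv ω i = ‖v‖ * (if 0 ≤ v i then (1 : ℝ) else -1) * ξ i ω)

/-- Second moment of a two-point random variable. -/
lemma two_point_sq {Ω : Type*} [MeasurableSpace Ω] (μ : Measure Ω) [IsProbabilityMeasure μ]
    (f : Ω → ℝ) (hf : Measurable f) (a b p : ℝ) (hab : a ≠ b)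
    (hp0 : 0 ≤ p) (hp1 : p ≤ 1)
    (hB : μ {ω | f ω = b} = ENNReal.ofReal p)
    (hA : μ {ω | f ω = a} = 1 - ENNReal.ofReal p) :
    Integrable (fun ω => (f ω) ^ 2) μ ∧
    ∫ ω, (f ω) ^ 2 ∂μ = p * b ^ 2 + (1 - p) * a ^ 2 := by
  set A := {ω | f ω = a} with hAdef
  set B := {ω | f ω = b} with hBdef
  have hAm : MeasurableSet A := hf (measurableSet_singleton a)
  have hBm : MeasurableSet B := hf (measurableSet_singleton b)
  have hple : ENNReal.ofReal p ≤ 1 := by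
    rw [← ENNReal.ofReal_one]; exact ENNReal.ofReal_le_ofReal hp1
  have hdisj : Disjoint A B := by
    rw [Set.disjoint_left]
    intro ω h1 h2
    exact hab ((show f ω = a from h1).symm.trans (show f ω = b from h2))
  have hunion : μ (A ∪ B) = 1 := by
    rw [measure_union hdisj hBm, hA, hB, tsub_add_cancel_of_le hple]
  have hcompl : μ (A ∪ B)ᶜ = 0 := by
    rw [measure_compl (hAm.union hBm) (measure_ne_top μ _), hunion, measure_univ, tsub_self]
  set g : Ω → ℝ := fun ω => A.indicator (fun _ => a ^ 2) ω + B.indicator (fun _ => b ^ 2) ω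
    with hgdef
  have hgint : Integrable g μ :=
    ((integrable_const (a ^ 2)).indicator hAm).add ((integrable_const (b ^ 2)).indicator hBm)
  have hmem : ∀ᵐ ω ∂μ, ω ∈ A ∪ B := by
    rw [ae_iff]
    have heq : {ω | ¬ ω ∈ A ∪ B} = (A ∪ B)ᶜ := rfl
    rw [heq]
    exact hcompl
  have hae : (fun ω => (f ω) ^ 2) =ᵐ[μ] g := by
    filter_upwards [hmem] with ω hω
    rcases hω with h | h
    · have hωB : ω ∉ B := fun hb => hab (h ▸ hb)
      simp only [hgdef, Set.indicator_of_mem h, Set.indicator_of_notMem hωB, add_zero]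
      rw [show f ω = a from h]
    · have hωA : ω ∉ A := fun ha => hab (ha ▸ h)
      simp only [hgdef, Set.indicator_of_mem h, Set.indicator_of_notMem hωA, zero_add]
      rw [show f ω = b from h]
  have hint : Integrable (fun ω => (f ω) ^ 2) μ := hgint.congr hae.symm
  refine ⟨hint, ?_⟩
  rw [integral_congr_ae hae, hgdef]
  rw [integral_add ((integrable_const (a ^ 2)).indicator hAm)
    ((integrable_const (b ^ 2)).indicator hBm), integral_indicator_const _ hAm,
    integral_indicator_const _ hBm, measureReal_def, measureReal_def, hA, hB]
  have h1 : ((1 : ENNReal) - ENNReal.ofReal p).toReal = 1 - p := by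
    rw [ENNReal.toReal_sub_of_le hple ENNReal.one_ne_top, ENNReal.toReal_one,
      ENNReal.toReal_ofReal hp0]
  rw [h1, ENNReal.toReal_ofReal hp0]
  simp [smul_eq_mul]
  ring

/-- **Second moment bound for stochastic quantization:**
`E[‖Q_s(v)‖₂²] ≤ (1 + min(n/s², √n/s)) · ‖v‖₂²`. -/
theorem stochQuant_second_moment {n : ℕ} (hn : 1 ≤ n)
    (v : EuclideanSpace ℝ (Fin n)) (hv : v ≠ 0) (s : ℕ) (hs : 1 ≤ s)
    {Ω : Type*} [MeasurableSpace Ω] (μ : Measure Ω) [IsProbabilityMeasure μ]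
    (Qv : Ω → EuclideanSpace ℝ (Fin n)) (hQ : IsStochQuant s μ v Qv) :
    ∫ ω, ‖Qv ω‖ ^ 2 ∂μ ≤
      (1 + min ((n : ℝ) / s ^ 2) (Real.sqrt n / s)) * ‖v‖ ^ 2 := by
  obtain ⟨ξ, ℓ, hmeas, _hindep, _hℓ, hbounds, hhi, hlo, hQeq⟩ := hQ
  have hvpos : (0 : ℝ) < ‖v‖ := norm_pos_iff.mpr hv
  have hspos : (0 : ℝ) < s := by exact_mod_cast hs
  set a : Fin n → ℝ := fun i => |v i| / ‖v‖ with hadef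
  set p : Fin n → ℝ := fun i => a i * s - ℓ i with hpdef
  have ha0 : ∀ i, 0 ≤ a i := fun i => div_nonneg (abs_nonneg _) hvpos.le
  have hp0 : ∀ i, 0 ≤ p i := by
    intro i
    have := (hbounds i).1
    have : (ℓ i : ℝ) ≤ a i * s := by
      rw [div_le_iff₀ hspos] at this
      linarith [this]
    simp only [hpdef]; linarith
  have hp1 : ∀ i, p i ≤ 1 := by
    intro i
    have := (hbounds i).2
    rw [le_div_iff₀ hspos] at this
    simp only [hpdef]; linarith
  have hpa : ∀ i, p i ≤ a i * s := by
    intro i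
    simp only [hpdef]
    have : (0 : ℝ) ≤ (ℓ i : ℝ) := Nat.cast_nonneg _
    linarith
  -- per-coordinate second moment
  have hcoord : ∀ i : Fin n,
      Integrable (fun ω => (ξ i ω) ^ 2) μ ∧
      ∫ ω, (ξ i ω) ^ 2 ∂μ =
        p i * (((ℓ i : ℝ) + 1) / s) ^ 2 + (1 - p i) * ((ℓ i : ℝ) / s) ^ 2 := by
    intro i
    refine two_point_sq μ (ξ i) (hmeas i) ((ℓ i : ℝ) / s) (((ℓ i : ℝ) + 1) / s) (p i)
      ?_ (hp0 i) (hp1 i) ?_ ?_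
    · intro h
      rw [div_eq_div_iff hspos.ne' hspos.ne'] at h
      nlinarith [hspos]
    · rw [hhi i]
    · rw [hlo i]
  set E : Fin n → ℝ :=
    fun i => p i * (((ℓ i : ℝ) + 1) / s) ^ 2 + (1 - p i) * ((ℓ i : ℝ) / s) ^ 2 with hEdef
  -- norm squared as sum of squares
  have hnormsq : ∀ x : EuclideanSpace ℝ (Fin n), ‖x‖ ^ 2 = ∑ i, (x i) ^ 2 := by
    intro x
    rw [EuclideanSpace.norm_eq, Real.sq_sqrt (Finset.sum_nonneg fun i _ => sq_nonneg _)]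
    simp [sq_abs]
  have hQsq : ∀ ω i, (Qv ω i) ^ 2 = ‖v‖ ^ 2 * (ξ i ω) ^ 2 := by
    intro ω i
    rw [hQeq ω i]
    split_ifs <;> ring
  have hEq1 : ∫ ω, ‖Qv ω‖ ^ 2 ∂μ = ‖v‖ ^ 2 * ∑ i, E i := by
    have h1 : (fun ω => ‖Qv ω‖ ^ 2) = fun ω => ∑ i, ‖v‖ ^ 2 * (ξ i ω) ^ 2 := by
      funext ω
      rw [hnormsq (Qv ω)]
      exact Finset.sum_congr rfl fun i _ => hQsq ω i
    rw [h1, integral_finset_sum _ (fun i _ => ((hcoord i).1).const_mul _)]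
    rw [Finset.mul_sum]
    refine Finset.sum_congr rfl fun i _ => ?_
    rw [integral_const_mul, (hcoord i).2]
  rw [hEq1]
  -- key algebraic identity and bound
  have hEa : ∀ i, E i = a i ^ 2 + p i * (1 - p i) / s ^ 2 := by
    intro i
    have ha : a i = ((ℓ i : ℝ) + p i) / s := by
      field_simp [hpdef]
      simp only [hpdef]; ring
    rw [hEdef, ha]
    field_simp
    ring
  have hEbound : ∀ i, E i ≤ a i ^ 2 + min (1 / (s : ℝ) ^ 2) (a i / s) := by
    intro i
    rw [hEa i]
    have h1 : p i * (1 - p i) / s ^ 2 ≤ 1 / (s : ℝ) ^ 2 := by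
      apply div_le_div_of_nonneg_right _ (by positivity)
      nlinarith [hp0 i, hp1 i]
    have h2 : p i * (1 - p i) / s ^ 2 ≤ a i / s := by
      have : p i * (1 - p i) ≤ a i * s := by
        nlinarith [hp0 i, hp1 i, hpa i, ha0 i, hspos]
      rw [div_le_div_iff₀ (by positivity) hspos]
      nlinarith [hspos]
    have := le_min h1 h2
    linarith
  -- sum of a_i^2 = 1
  have hsuma2 : ∑ i, a i ^ 2 = 1 := by
    have : ∑ i, a i ^ 2 = (∑ i, (v i) ^ 2) / ‖v‖ ^ 2 := by
      rw [Finset.sum_div]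
      refine Finset.sum_congr rfl fun i _ => ?_
      rw [hadef]
      rw [div_pow, sq_abs]
    rw [this, ← hnormsq v, div_self (by positivity)]
  -- sum of a_i ≤ sqrt n
  have hsuma : ∑ i, a i ≤ Real.sqrt n := by
    rw [Real.le_sqrt (Finset.sum_nonneg fun i _ => ha0 i) (Nat.cast_nonneg n)]
    have := Finset.sum_mul_sq_le_sq_mul_sq Finset.univ a (fun _ => (1 : ℝ))
    simp only [mul_one, one_pow, Finset.sum_const, Finset.card_univ, Fintype.card_fin,
      nsmul_eq_mul, hsuma2, one_mul] at this
    linarith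
  have hsumE : ∑ i, E i ≤ 1 + min ((n : ℝ) / s ^ 2) (Real.sqrt n / s) := by
    calc ∑ i, E i ≤ ∑ i, (a i ^ 2 + min (1 / (s : ℝ) ^ 2) (a i / s)) :=
          Finset.sum_le_sum fun i _ => hEbound i
      _ = 1 + ∑ i, min (1 / (s : ℝ) ^ 2) (a i / s) := by
          rw [Finset.sum_add_distrib, hsuma2]
      _ ≤ 1 + min ((n : ℝ) / s ^ 2) (Real.sqrt n / s) := by
          gcongr
          refine le_min ?_ ?_
          · calc ∑ i, min (1 / (s : ℝ) ^ 2) (a i / s) ≤ ∑ _i : Fin n, 1 / (s : ℝ) ^ 2 :=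
                Finset.sum_le_sum fun i _ => min_le_left _ _
              _ = (n : ℝ) / s ^ 2 := by
                simp [Finset.sum_const, Finset.card_univ]
                ring
          · calc ∑ i, min (1 / (s : ℝ) ^ 2) (a i / s) ≤ ∑ i, a i / s :=
                Finset.sum_le_sum fun i _ => min_le_right _ _
              _ = (∑ i, a i) / s := by rw [Finset.sum_div]
              _ ≤ Real.sqrt n / s := by
                gcongr
  calc ‖v‖ ^ 2 * ∑ i, E i ≤ ‖v‖ ^ 2 * (1 + min ((n : ℝ) / s ^ 2) (Real.sqrt n / s)) := by
        apply mul_le_mul_of_nonneg_left hsumE (by positivity)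
    _ = (1 + min ((n : ℝ) / s ^ 2) (Real.sqrt n / s)) * ‖v‖ ^ 2 := by ring
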